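/- For every n and every q ≥ n, every transformation f: 𝔹^n → 𝔹^n (not necessarily bijective) can be implemented by a reversible circuit over NOT, CNOT and C²NOT gates with q additional inputs; that is, F(n,q) = P₂(n,n), the set of all maps 𝔹^n → 𝔹^n. -/

import Mathlib

open Filter

namespace Rev

/-- A reversible gate `TOF(I; t)` on `N` lines: a control set `I` with `|I| ≤ 2`
and a target `t ∉ I`.  `|I| = 0, 1, 2` correspond to NOT, CNOT, C²NOT. -/
structure Gate (N : ℕ) where
  I : Finset (Fin N)
  t : Fin N
  card_le : I.card ≤ 2
  t_not_mem : t ∉ I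

/-- The transformation computed by a gate: the target coordinate is XORed with the
conjunction of the control coordinates (the empty conjunction is `1`). -/
def Gate.apply {N : ℕ} (g : Gate N) (x : Fin N → Bool) : Fin N → Bool :=
  fun j => if j = g.t then xor (x g.t) (decide (∀ i ∈ g.I, x i = true)) else x j

/-- A reversible circuit: a finite sequence (composition) of gates. -/
abbrev Circuit (N : ℕ) := List (Gate N)

/-- The transformation computed by a circuit (composition of the gate maps). -/
def Circuit.eval {N : ℕ} (S : Circuit N) (x : Fin N → Bool) : Fin N → Bool :=
  S.foldl (fun v g => g.apply v) x

/-- Gate complexity: the number of gates. -/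
def Circuit.L {N : ℕ} (S : Circuit N) : ℕ := S.length

/-- The number of NOT and CNOT gates. -/
def Circuit.LC {N : ℕ} (S : Circuit N) : ℕ := (S.filter fun g => g.I.card ≤ 1).length

/-- The number of C²NOT (Toffoli) gates. -/
def Circuit.LT {N : ℕ} (S : Circuit N) : ℕ := (S.filter fun g => g.I.card = 2).length

/-- The quantum weight, given weights `WC` for NOT/CNOT gates and `WT` for C²NOT gates. -/
noncomputable def Circuit.W {N : ℕ} (WC WT : ℝ) (S : Circuit N) : ℝ :=
  WC * S.LC + WT * S.LT

/-- A circuit has depth one if the sets `{t} ∪ I` of its gates are pairwise disjoint. -/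
def DepthOne {N : ℕ} (S : Circuit N) : Prop :=
  S.Pairwise fun g₁ g₂ => Disjoint (insert g₁.t g₁.I) (insert g₂.t g₂.I)

/-- The depth of a circuit: the minimal number of depth-one sub-circuits whose
concatenation is the circuit. -/
noncomputable def Circuit.D {N : ℕ} (S : Circuit N) : ℕ :=
  sInf {d | ∃ parts : List (Circuit N),
    parts.length = d ∧ parts.flatten = S ∧ ∀ p ∈ parts, DepthOne p}

/-- Padding an input vector with zero values on `q` additional inputs. -/
def pad {n q : ℕ} (x : Fin n → Bool) : Fin (n + q) → Bool :=
  fun i => if h : (i : ℕ) < n then x ⟨i, h⟩ else false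

/-- A circuit `S` with `n + q` inputs implements `f : 𝔹ⁿ → 𝔹ᵐ` with `q` additional
inputs: there is a permutation `π` of the output positions such that for every `x`,
applying `S` to `⟨x, 0, …, 0⟩` and permuting the coordinates by `π` yields a vector
whose first `m` coordinates equal `f x`. -/
def Implements {n q m : ℕ} (S : Circuit (n + q)) (f : (Fin n → Bool) → Fin m → Bool) :
    Prop :=
  m ≤ n + q ∧ ∃ π : Equiv.Perm (Fin (n + q)), ∀ x : Fin n → Bool, ∀ j : Fin m,
    ∀ hj : (j : ℕ) < n + q, Circuit.eval S (pad x) (π ⟨j, hj⟩) = f x j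

/-- `f ∈ F(n, q)`: `f : 𝔹ⁿ → 𝔹ⁿ` is implementable with `q` additional inputs. -/
def Implementable (n q : ℕ) (f : (Fin n → Bool) → Fin n → Bool) : Prop :=
  ∃ S : Circuit (n + q), Implements S f

/-- `L(f, q)`: minimal gate complexity of a circuit implementing `f` with `q`
additional inputs. -/
noncomputable def Lmin (n q : ℕ) (f : (Fin n → Bool) → Fin n → Bool) : ℕ :=
  sInf {l | ∃ S : Circuit (n + q), Implements S f ∧ S.L = l}

/-- The Shannon gate complexity function `L(n, q)`. -/
noncomputable def Lsh (n q : ℕ) : ℕ :=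
  sSup {l | ∃ f, Implementable n q f ∧ Lmin n q f = l}

/-- `D(f, q)`: minimal depth of a circuit implementing `f` with `q` additional inputs. -/
noncomputable def Dmin (n q : ℕ) (f : (Fin n → Bool) → Fin n → Bool) : ℕ :=
  sInf {d | ∃ S : Circuit (n + q), Implements S f ∧ S.D = d}

/-- The Shannon depth function `D(n, q)`. -/
noncomputable def Dsh (n q : ℕ) : ℕ :=
  sSup {d | ∃ f, Implementable n q f ∧ Dmin n q f = d}

/-- `W(f, q)`: minimal quantum weight of a circuit implementing `f` with `q`
additional inputs. -/
noncomputable def Wmin (WC WT : ℝ) (n q : ℕ) (f : (Fin n → Bool) → Fin n → Bool) : ℝ :=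
  sInf {w | ∃ S : Circuit (n + q), Implements S f ∧ Circuit.W WC WT S = w}

/-- The Shannon quantum weight function `W(n, q)`. -/
noncomputable def Wsh (WC WT : ℝ) (n q : ℕ) : ℝ :=
  sSup {w | ∃ f, Implementable n q f ∧ Wmin WC WT n q f = w}

/-- `a ~ b`: `a n / b n → 1`. -/
def AsympEquiv (a b : ℕ → ℝ) : Prop :=
  Tendsto (fun n => a n / b n) atTop (nhds 1)

/-- `a ≲ b`: `limsup (a n / b n) ≤ 1`. -/
def AsympLE (a b : ℕ → ℝ) : Prop :=
  Filter.limsup (fun n => a n / b n) atTop ≤ 1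

/-- A growing function: nondecreasing and tending to `+∞`. -/
def Growing (φ : ℕ → ℝ) : Prop :=
  Monotone φ ∧ Tendsto φ atTop atTop

/-- `2 ^ (n - ⌈n / φ(n)⌉)` as a real number. -/
noncomputable def pow2e (φ : ℕ → ℝ) (n : ℕ) : ℝ :=
  (2 : ℝ) ^ ((n : ℤ) - ⌈(n : ℝ) / φ n⌉)

end Rev

namespace Rev

lemma eval_nil {N : ℕ} (v : Fin N → Bool) : Circuit.eval ([] : Circuit N) v = v := rfl

lemma eval_cons {N : ℕ} (g : Gate N) (S : Circuit N) (v : Fin N → Bool) :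
    Circuit.eval (g :: S) v = Circuit.eval S (g.apply v) := rfl

lemma eval_append {N : ℕ} (S T : Circuit N) (v : Fin N → Bool) :
    Circuit.eval (S ++ T) v = Circuit.eval T (Circuit.eval S v) :=
  List.foldl_append

lemma apply_eq {N : ℕ} (g : Gate N) (v : Fin N → Bool) :
    g.apply v = Function.update v g.t (xor (v g.t) (decide (∀ i ∈ g.I, v i = true))) := by
  funext j
  simp [Gate.apply, Function.update_apply]

lemma decide_empty {N : ℕ} (v : Fin N → Bool) :
    decide (∀ i ∈ (∅ : Finset (Fin N)), v i = true) = true := by simp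

lemma decide_single {N : ℕ} (a : Fin N) (v : Fin N → Bool) :
    decide (∀ i ∈ ({a} : Finset (Fin N)), v i = true) = v a := by
  cases ha : v a <;> simp [ha]

lemma decide_pair {N : ℕ} (a b : Fin N) (v : Fin N → Bool) :
    decide (∀ i ∈ ({a, b} : Finset (Fin N)), v i = true) = (v a && v b) := by
  cases ha : v a <;> cases hb : v b <;> simp [ha, hb]


lemma eval_not {N : ℕ} (L : Fin N) (h1 h2) (w : Fin N → Bool) :
    Circuit.eval [(⟨∅, L, h1, h2⟩ : Gate N)] w = Function.update w L (xor (w L) true) := by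
  rw [eval_cons, eval_nil, apply_eq]
  show Function.update w L (xor (w L) (decide (∀ i ∈ (∅ : Finset (Fin N)), w i = true))) = _
  rw [decide_empty]

lemma eval_cnot {N : ℕ} (a L : Fin N) (h1 h2) (w : Fin N → Bool) :
    Circuit.eval [(⟨{a}, L, h1, h2⟩ : Gate N)] w = Function.update w L (xor (w L) (w a)) := by
  rw [eval_cons, eval_nil, apply_eq]
  show Function.update w L (xor (w L) (decide (∀ i ∈ ({a} : Finset (Fin N)), w i = true))) = _
  rw [decide_single]

lemma eval_tof {N : ℕ} (a b L : Fin N) (h1 h2) (w : Fin N → Bool) :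
    Circuit.eval [(⟨{a, b}, L, h1, h2⟩ : Gate N)] w
      = Function.update w L (xor (w L) (w a && w b)) := by
  rw [eval_cons, eval_nil, apply_eq]
  show Function.update w L (xor (w L) (decide (∀ i ∈ ({a, b} : Finset (Fin N)), w i = true))) = _
  rw [decide_pair]

lemma xor_circuit {N : ℕ} :
    ∀ (vs : List (Fin N)) (φ : (Fin N → Bool) → Bool) (L : Fin N),
      vs.Nodup →
      (∀ v w, (∀ i ∈ vs, v i = w i) → φ v = φ w) →
      L ∉ vs →
      (vs.length ≤ 1 ∨ vs.length + 2 ≤ N) →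
      ∃ S : Circuit N, ∀ v, S.eval v = Function.update v L (xor (v L) (φ v)) := by
  intro vs
  induction vs with
  | nil =>
    intro φ L _ hφ _ _
    have hc : ∀ v, φ v = φ (fun _ => false) := fun v => hφ v _ (by simp)
    by_cases h : φ (fun _ => false) = true
    · refine ⟨[⟨∅, L, by simp, by simp⟩], fun v => ?_⟩
      rw [eval_cons, eval_nil, apply_eq]
      have : φ v = true := by rw [hc v, h]
      simp [this, decide_empty]
    · refine ⟨[], fun v => ?_⟩
      have : φ v = false := by rw [hc v]; simpa using h
      rw [eval_nil, this]
      simp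
  | cons vn rest ih =>
    intro φ L hd hφ hL hN
    have hvn_rest : vn ∉ rest := (List.nodup_cons.mp hd).1
    have hrest_nd : rest.Nodup := (List.nodup_cons.mp hd).2
    have hLvn : L ≠ vn := fun h => hL (h ▸ List.mem_cons_self)
    have hLrest : L ∉ rest := fun h => hL (List.mem_cons_of_mem _ h)
    set φ0 : (Fin N → Bool) → Bool := fun v => φ (Function.update v vn false) with hφ0def
    set φ1 : (Fin N → Bool) → Bool :=
      fun v => xor (φ (Function.update v vn false)) (φ (Function.update v vn true)) with hφ1def
    have hupd : ∀ (v w : Fin N → Bool) (c : Bool), (∀ i ∈ rest, v i = w i) →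
        ∀ i ∈ vn :: rest, Function.update v vn c i = Function.update w vn c i := by
      intro v w c hvw i hi
      rcases List.mem_cons.mp hi with h1 | h1
      · subst h1; simp
      · have hne : i ≠ vn := fun e => hvn_rest (e ▸ h1)
        simp [Function.update_apply, hne, hvw i h1]
    have hφ0 : ∀ v w, (∀ i ∈ rest, v i = w i) → φ0 v = φ0 w :=
      fun v w hvw => hφ _ _ (hupd v w false hvw)
    have hφ1 : ∀ v w, (∀ i ∈ rest, v i = w i) → φ1 v = φ1 w := by
      intro v w hvw
      simp only [hφ1def]
      rw [hφ _ _ (hupd v w false hvw), hφ _ _ (hupd v w true hvw)]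
    have hkey : ∀ v, φ v = xor (φ0 v) (v vn && φ1 v) := by
      intro v
      simp only [hφ0def, hφ1def]
      cases hc : v vn with
      | false =>
        have he : Function.update v vn false = v := by rw [← hc]; exact Function.update_eq_self _ _
        rw [he]; simp
      | true =>
        have he : Function.update v vn true = v := by rw [← hc]; exact Function.update_eq_self _ _
        rw [he]
        cases φ (Function.update v vn false) <;> cases φ v <;> rfl
    obtain rfl | hne := eq_or_ne rest ([] : List (Fin N))
    · -- base-ish case: one variable, use CNOT/NOT, no ancilla needed
      have hc0 : ∀ v, φ0 v = φ0 (fun _ => false) := fun v => hφ0 _ _ (by simp)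
      have hc1 : ∀ v, φ1 v = φ1 (fun _ => false) := fun v => hφ1 _ _ (by simp)
      have hLvn' : L ∉ ({vn} : Finset (Fin N)) := by simp [hLvn]
      refine ⟨(if φ1 (fun _ => false) = true then [⟨{vn}, L, by simp, hLvn'⟩] else []) ++
              (if φ0 (fun _ => false) = true then [⟨∅, L, by rw [Finset.card_empty]; omega, by simp⟩] else []),
        fun v => ?_⟩
      have hφv : φ v = xor (φ0 (fun _ => false)) (v vn && φ1 (fun _ => false)) := by
        rw [hkey v, hc0 v, hc1 v]
      rw [eval_append]
      by_cases h1 : φ1 (fun _ => false) = true <;> by_cases h0 : φ0 (fun _ => false) = true <;>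
        simp only [h1, h0, Bool.not_eq_true] at hφv <;>
        simp only [h1, h0, if_true, if_false, Bool.not_eq_true, if_neg Bool.false_ne_true,
          eval_nil, eval_cnot, eval_not, Function.update_idem, Function.update_self,
          hφv] <;>
      first
        | (congr 1; cases v L <;> cases v vn <;> rfl)
        | (rw [show xor (v L) (xor false (v vn && false)) = v L by
              cases v L <;> cases v vn <;> rfl, Function.update_eq_self])
    · -- main case: rest nonempty, find a dirty ancilla and recurse
      have hlen : 1 ≤ rest.length := by
        cases rest with
        | nil => exact absurd rfl hne
        | cons _ _ => simp
      have hN2 : (vn :: rest).length + 2 ≤ N := by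
        rcases hN with h' | h'
        · simp only [List.length_cons] at h'; omega
        · exact h'
      -- find an ancilla a ∉ {L, vn} ∪ rest
      obtain ⟨a, ha⟩ : ∃ a : Fin N, a ∉ insert L (insert vn rest.toFinset) := by
        by_contra hcon
        push_neg at hcon
        have hsub : (Finset.univ : Finset (Fin N)) ⊆ insert L (insert vn rest.toFinset) :=
          fun x _ => hcon x
        have hcard := Finset.card_le_card hsub
        have h1 : (insert L (insert vn rest.toFinset)).card
            ≤ rest.toFinset.card + 2 := by
          calc (insert L (insert vn rest.toFinset)).card
              ≤ (insert vn rest.toFinset).card + 1 := Finset.card_insert_le _ _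
            _ ≤ rest.toFinset.card + 1 + 1 := by
                have := Finset.card_insert_le vn rest.toFinset; omega
            _ = rest.toFinset.card + 2 := by omega
        have h2 : rest.toFinset.card ≤ rest.length := rest.toFinset_card_le
        have h3 : (Finset.univ : Finset (Fin N)).card = N := by simp
        simp only [List.length_cons] at hN2
        omega
      have haL : a ≠ L := fun e => ha (by simp [e])
      have havn : a ≠ vn := fun e => ha (by simp [e])
      have harest : a ∉ rest := fun e => ha (by simp [List.mem_toFinset, e])
      -- recursive circuits
      obtain ⟨S1, hS1⟩ := ih φ1 a hrest_nd hφ1 harest (Or.inr (by simp at hN2 ⊢; omega))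
      obtain ⟨S0, hS0⟩ := ih φ0 L hrest_nd hφ0 hLrest (Or.inr (by simp at hN2 ⊢; omega))
      have hcard2 : ({a, vn} : Finset (Fin N)).card ≤ 2 :=
        (Finset.card_insert_le _ _).trans (by simp)
      have hLmem : L ∉ ({a, vn} : Finset (Fin N)) := by
        simp [Ne.symm haL, hLvn]
      set g : Gate N := ⟨{a, vn}, L, hcard2, hLmem⟩ with hg
      have hgap : ∀ w : Fin N → Bool,
          g.apply w = Function.update w L (xor (w L) (w a && w vn)) := by
        intro w
        rw [← eval_tof a vn L hcard2 hLmem w]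
        rfl
      refine ⟨S1 ++ ((g :: S1) ++ (g :: S0)), fun v => ?_⟩
      rw [eval_append, eval_append, eval_cons, eval_cons]
      set w1 := Function.update v a (xor (v a) (φ1 v)) with hw1
      set w2 := Function.update w1 L (xor (w1 L) (w1 a && w1 vn)) with hw2
      set w3 := Function.update w2 a (xor (w2 a) (φ1 w2)) with hw3
      set w4 := Function.update w3 L (xor (w3 L) (w3 a && w3 vn)) with hw4
      have e1 : Circuit.eval S1 v = w1 := by rw [hw1]; exact hS1 v
      have e2 : g.apply w1 = w2 := by rw [hw2]; exact hgap w1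
      have e3 : Circuit.eval S1 w2 = w3 := by rw [hw3]; exact hS1 w2
      have e4 : g.apply w3 = w4 := by rw [hw4]; exact hgap w3
      rw [e1, e2, e3, e4, hS0 w4]
      -- pointwise facts
      have w1L : w1 L = v L := by rw [hw1]; exact Function.update_of_ne (Ne.symm haL) _ _
      have w1vn : w1 vn = v vn := by rw [hw1]; exact Function.update_of_ne (Ne.symm havn) _ _
      have w1a : w1 a = xor (v a) (φ1 v) := by rw [hw1]; exact Function.update_self _ _ _
      have w2rest : ∀ i ∈ rest, w2 i = v i := by
        intro i hi
        have hiL : i ≠ L := fun e => hLrest (e ▸ hi)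
        have hia : i ≠ a := fun e => harest (e ▸ hi)
        rw [hw2, Function.update_of_ne hiL, hw1, Function.update_of_ne hia]
      have hφ1w2 : φ1 w2 = φ1 v := hφ1 _ _ w2rest
      have w2a : w2 a = xor (v a) (φ1 v) := by
        rw [hw2, Function.update_of_ne haL, w1a]
      have w2vn : w2 vn = v vn := by
        rw [hw2, Function.update_of_ne (Ne.symm hLvn), w1vn]
      have w2L : w2 L = xor (v L) (xor (v a) (φ1 v) && v vn) := by
        rw [hw2, Function.update_self, w1L, w1a, w1vn]
      have w3a : w3 a = v a := by
        rw [hw3, Function.update_self, hφ1w2, w2a]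
        cases v a <;> cases φ1 v <;> rfl
      have w3vn : w3 vn = v vn := by
        rw [hw3, Function.update_of_ne (Ne.symm havn), w2vn]
      have w3L : w3 L = w2 L := by
        rw [hw3, Function.update_of_ne (Ne.symm haL)]
      have w3rest : ∀ i ∈ rest, w3 i = v i := by
        intro i hi
        have hia : i ≠ a := fun e => harest (e ▸ hi)
        rw [hw3, Function.update_of_ne hia]
        exact w2rest i hi
      have w4rest : ∀ i ∈ rest, w4 i = v i := by
        intro i hi
        have hiL : i ≠ L := fun e => hLrest (e ▸ hi)
        rw [hw4, Function.update_of_ne hiL]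
        exact w3rest i hi
      have hφ0w4 : φ0 w4 = φ0 v := hφ0 _ _ w4rest
      have w4L : w4 L = xor (xor (v L) (xor (v a) (φ1 v) && v vn)) (v a && v vn) := by
        rw [hw4, Function.update_self, w3a, w3vn, w3L, w2L]
      funext j
      by_cases hj : j = L
      · subst hj
        rw [Function.update_self, Function.update_self, hφ0w4, w4L, hkey v]
        cases v j <;> cases v a <;> cases v vn <;> cases φ1 v <;> cases φ0 v <;> rfl
      · rw [Function.update_of_ne hj, Function.update_of_ne hj]
        by_cases hja : j = a
        · subst hja
          have h4 : w4 j = w3 j := by rw [hw4]; exact Function.update_of_ne haL _ _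
          rw [h4, w3a]
        · rw [hw4, Function.update_of_ne hj, hw3, Function.update_of_ne hja,
            hw2, Function.update_of_ne hj, hw1, Function.update_of_ne hja]


lemma blocks_eval {N n : ℕ} (emb tgt : Fin n → Fin N)
    (hinj : Function.Injective tgt)
    (hdisj : ∀ i j, emb i ≠ tgt j)
    (φ : Fin n → (Fin N → Bool) → Bool)
    (hφ : ∀ j (v w : Fin N → Bool), (∀ i, v (emb i) = w (emb i)) → φ j v = φ j w)
    (C : Fin n → Circuit N)
    (hC : ∀ j v, Circuit.eval (C j) v
      = Function.update v (tgt j) (xor (v (tgt j)) (φ j v))) :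
    ∀ (l : List (Fin n)), l.Nodup → ∀ v : Fin N → Bool,
      (∀ i, Circuit.eval (l.flatMap C) v (emb i) = v (emb i)) ∧
      (∀ j, Circuit.eval (l.flatMap C) v (tgt j) =
        if j ∈ l then xor (v (tgt j)) (φ j v) else v (tgt j)) := by
  intro l
  induction l with
  | nil =>
    intro _ v
    refine ⟨fun i => rfl, fun j => ?_⟩
    simp [eval_nil]
  | cons j0 l ih =>
    intro hnd v
    have hj0 : j0 ∉ l := (List.nodup_cons.mp hnd).1
    have hl : l.Nodup := (List.nodup_cons.mp hnd).2
    have hflat : Circuit.eval ((j0 :: l).flatMap C) v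
        = Circuit.eval (l.flatMap C) (Circuit.eval (C j0) v) := by
      rw [show (j0 :: l).flatMap C = C j0 ++ l.flatMap C by simp [List.flatMap_cons],
        eval_append]
    have hv'eq : Circuit.eval (C j0) v
        = Function.update v (tgt j0) (xor (v (tgt j0)) (φ j0 v)) := hC j0 v
    have hemb : ∀ i, Circuit.eval (C j0) v (emb i) = v (emb i) := fun i => by
      rw [hv'eq]; exact Function.update_of_ne (hdisj i j0) _ _
    obtain ⟨ihe, iht⟩ := ih hl (Circuit.eval (C j0) v)
    refine ⟨fun i => ?_, fun j => ?_⟩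
    · rw [hflat, ihe i, hemb i]
    · rw [hflat, iht j]
      by_cases hmem : j ∈ l
      · have hjne : j ≠ j0 := fun e => hj0 (e ▸ hmem)
        rw [if_pos hmem, if_pos (List.mem_cons_of_mem _ hmem)]
        have h1 : Circuit.eval (C j0) v (tgt j) = v (tgt j) := by
          rw [hv'eq]
          exact Function.update_of_ne (fun e => hjne (hinj e)) _ _
        rw [h1, hφ j _ _ hemb]
      · rw [if_neg hmem]
        by_cases hj : j = j0
        · subst hj
          rw [if_pos (List.mem_cons_self), hv'eq, Function.update_self]
        · rw [if_neg (by simp [hj, hmem]), hv'eq,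
            Function.update_of_ne (fun e => hj (hinj e))]


/-- For every `q ≥ n`, every transformation `f : 𝔹ⁿ → 𝔹ⁿ` can be implemented by a
reversible circuit with `q` additional inputs; that is, `F(n, q) = P₂(n, n)`. -/
theorem implementable_of_q_ge_n (n q : ℕ) (h : n ≤ q)
    (f : (Fin n → Bool) → Fin n → Bool) :
    ∃ S : Circuit (n + q), Implements S f := by
  have hnN : n ≤ n + q := Nat.le_add_right n q
  set emb : Fin n → Fin (n + q) := fun i => ⟨(i : ℕ), lt_of_lt_of_le i.2 hnN⟩ with hembdef
  set tgt : Fin n → Fin (n + q) :=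
    fun j => ⟨(j : ℕ) + n, by have := j.isLt; omega⟩ with htgtdef
  have hinj : Function.Injective tgt := by
    intro a b hab
    simp only [htgtdef] at hab
    have h1 : (a : ℕ) + n = (b : ℕ) + n := by simpa using hab
    exact Fin.ext (by omega)
  have hembinj : Function.Injective emb := by
    intro a b hab
    simp only [hembdef] at hab
    exact Fin.ext (by simpa using hab)
  have hdisj : ∀ i j, emb i ≠ tgt j := by
    intro i j hc
    simp only [hembdef, htgtdef] at hc
    have h1 : (i : ℕ) = (j : ℕ) + n := by simpa using hc
    have := i.isLt
    omega
  set φ : Fin n → (Fin (n + q) → Bool) → Bool :=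
    fun j v => f (fun i => v (emb i)) j with hφdef
  have hφ : ∀ j (v w : Fin (n + q) → Bool),
      (∀ i, v (emb i) = w (emb i)) → φ j v = φ j w := by
    intro j v w hvw
    simp only [hφdef]
    rw [show (fun i => v (emb i)) = (fun i => w (emb i)) from funext hvw]
  have hex : ∀ j : Fin n, ∃ S : Circuit (n + q), ∀ v, Circuit.eval S v
      = Function.update v (tgt j) (xor (v (tgt j)) (φ j v)) := by
    intro j
    apply xor_circuit ((List.finRange n).map emb) (φ j) (tgt j)
    · exact (List.nodup_finRange n).map hembinj
    · intro v w hvw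
      apply hφ j
      intro i
      exact hvw (emb i) (List.mem_map_of_mem (List.mem_finRange i))
    · intro hmem
      obtain ⟨i, _, he⟩ := List.mem_map.mp hmem
      exact hdisj i j he
    · simp only [List.length_map, List.length_finRange]
      omega
  choose C hC using hex
  have hB := blocks_eval emb tgt hinj hdisj φ hφ C hC (List.finRange n)
    (List.nodup_finRange n)
  set σ : Fin (n + q) → Fin (n + q) := fun i =>
    if h1 : (i : ℕ) < n then ⟨(i : ℕ) + n, by omega⟩
    else if h2 : (i : ℕ) < n + n then ⟨(i : ℕ) - n, by have := i.isLt; omega⟩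
    else i with hσdef
  have hσ : Function.Involutive σ := by
    intro i
    simp only [hσdef]
    by_cases h1 : (i : ℕ) < n
    · rw [dif_pos h1, dif_neg (by simp <;> omega), dif_pos (by simp <;> omega)]
      ext
      simp
    · rw [dif_neg h1]
      by_cases h2 : (i : ℕ) < n + n
      · rw [dif_pos h2, dif_pos (by simp <;> omega)]
        ext
        simp
        omega
      · rw [dif_neg h2, dif_neg h1, dif_neg h2]
  refine ⟨(List.finRange n).flatMap C, ?_⟩
  show n ≤ n + q ∧ ∃ π : Equiv.Perm (Fin (n + q)), ∀ x : Fin n → Bool, ∀ j : Fin n,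
    ∀ hj : (j : ℕ) < n + q,
      Circuit.eval ((List.finRange n).flatMap C) (pad x) (π ⟨j, hj⟩) = f x j
  refine ⟨hnN, Function.Involutive.toPerm σ hσ, fun x j hj => ?_⟩
  have hπ : Function.Involutive.toPerm σ hσ ⟨(j : ℕ), hj⟩ = tgt j := by
    show σ ⟨(j : ℕ), hj⟩ = tgt j
    simp only [hσdef, htgtdef]
    rw [dif_pos (by simpa using j.isLt)]
  rw [hπ, (hB (pad x)).2 j, if_pos (List.mem_finRange j)]
  have hpadtgt : pad x (tgt j) = false := by
    simp only [pad, htgtdef]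
    rw [dif_neg (by simp <;> omega)]
  have hpademb : (fun i => pad x (emb i)) = x := by
    funext i
    simp only [pad, hembdef]
    rw [dif_pos (by simpa using i.isLt)]
  rw [hpadtgt, hφdef]
  simp only [hpademb, Bool.false_xor]


end Rev
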